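/- The two Kepler first integrals in elliptic coordinates, I₁ = ((u₁² − κ²)p₁² − (u₂² − κ²)p₂²)/(u₁² − u₂²) + α/(u₁ + u₂) and I₂ = (−u₂²(u₁² − κ²)p₁² + u₁²(u₂² − κ²)p₂²)/(u₁² − u₂²) + αu₁u₂/(u₁ + u₂), Poisson-commute: {I₁, I₂} = 0, where {F,G} = ∂F/∂u₁·∂G/∂p₁ − ∂F/∂p₁·∂G/∂u₁ + ∂F/∂u₂·∂G/∂p₂ − ∂F/∂p₂·∂G/∂u₂. -/

import Mathlib

/-- Canonical Poisson bracket of two functions on `T*ℝ²` with canonical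
coordinates `(u₁, u₂, p₁, p₂)`. -/
noncomputable def poissonBracket (F G : ℝ → ℝ → ℝ → ℝ → ℝ) (u1 u2 p1 p2 : ℝ) : ℝ :=
  deriv (fun x => F x u2 p1 p2) u1 * deriv (fun x => G u1 u2 x p2) p1
  - deriv (fun x => F u1 u2 x p2) p1 * deriv (fun x => G x u2 p1 p2) u1
  + deriv (fun x => F u1 x p1 p2) u2 * deriv (fun x => G u1 u2 p1 x) p2
  - deriv (fun x => F u1 u2 p1 x) p2 * deriv (fun x => G u1 x p1 p2) u2

/-- Kepler integral `I₁` (twice the Hamiltonian) in elliptic coordinates. -/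
noncomputable def keplerI1 (κ α : ℝ) : ℝ → ℝ → ℝ → ℝ → ℝ := fun u1 u2 p1 p2 =>
  ((u1 ^ 2 - κ ^ 2) * p1 ^ 2 - (u2 ^ 2 - κ ^ 2) * p2 ^ 2) / (u1 ^ 2 - u2 ^ 2)
    + α / (u1 + u2)

/-- Kepler integral `I₂` in elliptic coordinates. -/
noncomputable def keplerI2 (κ α : ℝ) : ℝ → ℝ → ℝ → ℝ → ℝ := fun u1 u2 p1 p2 =>
  (-u2 ^ 2 * (u1 ^ 2 - κ ^ 2) * p1 ^ 2 + u1 ^ 2 * (u2 ^ 2 - κ ^ 2) * p2 ^ 2)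
      / (u1 ^ 2 - u2 ^ 2) + α * u1 * u2 / (u1 + u2)

lemma deriv_aux1 (a b a' c d e f t : ℝ) (h1 : a' * t ^ 2 + c ≠ 0) (h2 : t + f ≠ 0) :
    deriv (fun x : ℝ => (a * x ^ 2 + b) / (a' * x ^ 2 + c) + (d * x + e) / (x + f)) t
    = ((2 * a * t) * (a' * t ^ 2 + c) - (a * t ^ 2 + b) * (2 * a' * t)) / (a' * t ^ 2 + c) ^ 2
      + (d * (t + f) - (d * t + e)) / (t + f) ^ 2 := by
  have hA : HasDerivAt (fun x : ℝ => a * x ^ 2 + b) (2 * a * t) t := by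
    have := ((hasDerivAt_pow 2 t).const_mul a).add_const b
    refine this.congr_deriv ?_
    push_cast; ring
  have hB : HasDerivAt (fun x : ℝ => a' * x ^ 2 + c) (2 * a' * t) t := by
    have := ((hasDerivAt_pow 2 t).const_mul a').add_const c
    refine this.congr_deriv ?_
    push_cast; ring
  have hC : HasDerivAt (fun x : ℝ => d * x + e) d t := by
    have := ((hasDerivAt_id t).const_mul d).add_const e
    refine this.congr_deriv ?_; ring
  have hE : HasDerivAt (fun x : ℝ => x + f) 1 t := (hasDerivAt_id t).add_const f
  have hDiv1 := hA.div hB h1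
  have hDiv2 := hC.div hE h2
  have := hDiv1.add hDiv2
  rw [show deriv (fun x : ℝ => (a * x ^ 2 + b) / (a' * x ^ 2 + c) + (d * x + e) / (x + f)) t = _ from this.deriv]
  ring_nf

lemma deriv_aux2 (a b c e t : ℝ) :
    deriv (fun x : ℝ => (a * x ^ 2 + b) / c + e) t = 2 * a * t / c := by
  have hA : HasDerivAt (fun x : ℝ => (a * x ^ 2 + b) / c + e) (2 * a * t / c) t := by
    have := (((hasDerivAt_pow 2 t).const_mul a).add_const b).div_const c
    have h2 := this.add_const e
    refine h2.congr_deriv ?_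
    push_cast; ring
  exact hA.deriv

/-- The two Kepler first integrals in elliptic coordinates Poisson-commute. -/
theorem kepler_integrals_commute (κ α : ℝ) (u1 u2 p1 p2 : ℝ)
    (hne : u1 ^ 2 ≠ u2 ^ 2) (hsum : u1 + u2 ≠ 0) :
    poissonBracket (keplerI1 κ α) (keplerI2 κ α) u1 u2 p1 p2 = 0 := by
  have hD : u1 ^ 2 - u2 ^ 2 ≠ 0 := sub_ne_zero.mpr hne
  have hD1 : (1 : ℝ) * u1 ^ 2 + -u2 ^ 2 ≠ 0 := by ring_nf; ring_nf at hD; exact hD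
  have hD2 : (-1 : ℝ) * u2 ^ 2 + u1 ^ 2 ≠ 0 := by
    intro h; apply hD; linarith
  have hS1 : u1 + u2 ≠ 0 := hsum
  have hS2 : u2 + u1 ≠ 0 := by rwa [add_comm]
  unfold poissonBracket keplerI1 keplerI2
  -- ∂I1/∂u1
  have e1 : (fun x : ℝ => ((x ^ 2 - κ ^ 2) * p1 ^ 2 - (u2 ^ 2 - κ ^ 2) * p2 ^ 2) / (x ^ 2 - u2 ^ 2) + α / (x + u2))
      = (fun x : ℝ => (p1 ^ 2 * x ^ 2 + (-(κ ^ 2 * p1 ^ 2) - (u2 ^ 2 - κ ^ 2) * p2 ^ 2)) / (1 * x ^ 2 + -u2 ^ 2) + (0 * x + α) / (x + u2)) := by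
    funext x; ring
  -- ∂I1/∂u2
  have e2 : (fun x : ℝ => ((u1 ^ 2 - κ ^ 2) * p1 ^ 2 - (x ^ 2 - κ ^ 2) * p2 ^ 2) / (u1 ^ 2 - x ^ 2) + α / (u1 + x))
      = (fun x : ℝ => ((-p2 ^ 2) * x ^ 2 + ((u1 ^ 2 - κ ^ 2) * p1 ^ 2 + κ ^ 2 * p2 ^ 2)) / ((-1) * x ^ 2 + u1 ^ 2) + (0 * x + α) / (x + u1)) := by
    funext x; ring
  -- ∂I1/∂p1
  have e3 : (fun x : ℝ => ((u1 ^ 2 - κ ^ 2) * x ^ 2 - (u2 ^ 2 - κ ^ 2) * p2 ^ 2) / (u1 ^ 2 - u2 ^ 2) + α / (u1 + u2))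
      = (fun x : ℝ => ((u1 ^ 2 - κ ^ 2) * x ^ 2 + (-(u2 ^ 2 - κ ^ 2) * p2 ^ 2)) / (u1 ^ 2 - u2 ^ 2) + α / (u1 + u2)) := by
    funext x; ring
  -- ∂I1/∂p2
  have e4 : (fun x : ℝ => ((u1 ^ 2 - κ ^ 2) * p1 ^ 2 - (u2 ^ 2 - κ ^ 2) * x ^ 2) / (u1 ^ 2 - u2 ^ 2) + α / (u1 + u2))
      = (fun x : ℝ => ((-(u2 ^ 2 - κ ^ 2)) * x ^ 2 + (u1 ^ 2 - κ ^ 2) * p1 ^ 2) / (u1 ^ 2 - u2 ^ 2) + α / (u1 + u2)) := by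
    funext x; ring
  -- ∂I2/∂u1
  have e5 : (fun x : ℝ => (-u2 ^ 2 * (x ^ 2 - κ ^ 2) * p1 ^ 2 + x ^ 2 * (u2 ^ 2 - κ ^ 2) * p2 ^ 2) / (x ^ 2 - u2 ^ 2) + α * x * u2 / (x + u2))
      = (fun x : ℝ => ((-u2 ^ 2 * p1 ^ 2 + (u2 ^ 2 - κ ^ 2) * p2 ^ 2) * x ^ 2 + u2 ^ 2 * κ ^ 2 * p1 ^ 2) / (1 * x ^ 2 + -u2 ^ 2) + ((α * u2) * x + 0) / (x + u2)) := by
    funext x; ring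
  -- ∂I2/∂u2
  have e6 : (fun x : ℝ => (-x ^ 2 * (u1 ^ 2 - κ ^ 2) * p1 ^ 2 + u1 ^ 2 * (x ^ 2 - κ ^ 2) * p2 ^ 2) / (u1 ^ 2 - x ^ 2) + α * u1 * x / (u1 + x))
      = (fun x : ℝ => ((-(u1 ^ 2 - κ ^ 2) * p1 ^ 2 + u1 ^ 2 * p2 ^ 2) * x ^ 2 + (-(u1 ^ 2 * κ ^ 2 * p2 ^ 2))) / ((-1) * x ^ 2 + u1 ^ 2) + ((α * u1) * x + 0) / (x + u1)) := by
    funext x; ring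
  -- ∂I2/∂p1
  have e7 : (fun x : ℝ => (-u2 ^ 2 * (u1 ^ 2 - κ ^ 2) * x ^ 2 + u1 ^ 2 * (u2 ^ 2 - κ ^ 2) * p2 ^ 2) / (u1 ^ 2 - u2 ^ 2) + α * u1 * u2 / (u1 + u2))
      = (fun x : ℝ => ((-u2 ^ 2 * (u1 ^ 2 - κ ^ 2)) * x ^ 2 + u1 ^ 2 * (u2 ^ 2 - κ ^ 2) * p2 ^ 2) / (u1 ^ 2 - u2 ^ 2) + α * u1 * u2 / (u1 + u2)) := by
    funext x; ring
  -- ∂I2/∂p2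
  have e8 : (fun x : ℝ => (-u2 ^ 2 * (u1 ^ 2 - κ ^ 2) * p1 ^ 2 + u1 ^ 2 * (u2 ^ 2 - κ ^ 2) * x ^ 2) / (u1 ^ 2 - u2 ^ 2) + α * u1 * u2 / (u1 + u2))
      = (fun x : ℝ => ((u1 ^ 2 * (u2 ^ 2 - κ ^ 2)) * x ^ 2 + (-u2 ^ 2 * (u1 ^ 2 - κ ^ 2) * p1 ^ 2)) / (u1 ^ 2 - u2 ^ 2) + α * u1 * u2 / (u1 + u2)) := by
    funext x; ring
  rw [e1, e2, e3, e4, e5, e6, e7, e8,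
    deriv_aux1 _ _ _ _ _ _ _ _ hD1 hS1,
    deriv_aux1 _ _ _ _ _ _ _ _ hD2 hS2,
    deriv_aux2, deriv_aux2,
    deriv_aux1 _ _ _ _ _ _ _ _ hD1 hS1,
    deriv_aux1 _ _ _ _ _ _ _ _ hD2 hS2,
    deriv_aux2, deriv_aux2]
  have hDsq : ((1:ℝ) * u1 ^ 2 + -u2 ^ 2) ≠ 0 := hD1
  field_simp
  ring
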